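/- (Conservativeness of the ε-mollified safety probability.) Assume C_ε := { x ∈ C : dist(x, Cᶜ) ≥ ε } is nonempty. Then for every sample path ω, Σ_{k=0}^∞ r_ε(S_k(ω)) ≤ Σ_{k=0}^∞ r(S_k(ω)), and consequently the mollified value is a lower bound for the safety probability: E[ Σ_{k=0}^∞ r_ε(S_k) ] ≤ P( X_k ∈ C for all k ∈ {0, …, N} ). -/

import Mathlib

open scoped Classical

/-- A pair `(h, y)` is absorbing iff `h < 0` or `y ∉ C`. -/
def IsAbsorbing {𝒳 : Type*} (C : Set 𝒳) (s : ℝ × 𝒳) : Prop :=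
  s.1 < 0 ∨ s.2 ∉ C

/-- Reward: `1` if `0 ≤ h < Δt` and `(h, y)` is not absorbing, else `0`. -/
noncomputable def reward {𝒳 : Type*} (C : Set 𝒳) (Δt : ℝ) (s : ℝ × 𝒳) : ℝ :=
  if 0 ≤ s.1 ∧ s.1 < Δt ∧ ¬ IsAbsorbing C s then 1 else 0

/-- The augmented trajectory built from a realized trajectory `x`. -/
noncomputable def augTraj {𝒳 : Type*} (C : Set 𝒳) (Δt τ : ℝ) (x : ℕ → 𝒳) : ℕ → ℝ × 𝒳
  | 0 => (τ, x 0)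
  | k + 1 =>
      if IsAbsorbing C (augTraj C Δt τ x k) then augTraj C Δt τ x k
      else ((augTraj C Δt τ x k).1 - Δt, x (k + 1))

open Metric

/-- The shrunk safe set `C_ε = {x ∈ C : dist(x, Cᶜ) ≥ ε}`. -/
def shrunkSet {𝒳 : Type*} [MetricSpace 𝒳] (C : Set 𝒳) (ε : ℝ) : Set 𝒳 :=
  {x ∈ C | ε ≤ infDist x Cᶜ}

/-- The mollified payoff `l_ε(x) = max{1 - dist(x, C_ε)/ε, 0}`. -/
noncomputable def molPayoff {𝒳 : Type*} [MetricSpace 𝒳] (C : Set 𝒳) (ε : ℝ) (x : 𝒳) : ℝ :=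
  max (1 - infDist x (shrunkSet C ε) / ε) 0

/-- The ε-mollified reward `r_ε(h,y) = 𝟙[0 ≤ h < Δt]·𝟙[(h,y) not absorbing]·l_ε(y)`. -/
noncomputable def rewardEps {𝒳 : Type*} [MetricSpace 𝒳] (C : Set 𝒳) (Δt ε : ℝ)
    (s : ℝ × 𝒳) : ℝ :=
  (if 0 ≤ s.1 ∧ s.1 < Δt then (1 : ℝ) else 0) *
    (if ¬ IsAbsorbing C s then (1 : ℝ) else 0) * molPayoff C ε s.2

open MeasureTheory

section Aux

variable {𝒳 : Type*} [MetricSpace 𝒳]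

lemma reward_nonneg (C : Set 𝒳) (Δt : ℝ) (s : ℝ × 𝒳) : 0 ≤ reward C Δt s := by
  unfold reward; split_ifs <;> norm_num

lemma rewardEps_nonneg (C : Set 𝒳) (Δt ε : ℝ) (s : ℝ × 𝒳) : 0 ≤ rewardEps C Δt ε s := by
  unfold rewardEps
  apply mul_nonneg (mul_nonneg _ _) (le_max_right _ _) <;> (split_ifs <;> norm_num)

lemma rewardEps_le_reward (C : Set 𝒳) (Δt ε : ℝ) (hε : 0 < ε) (s : ℝ × 𝒳) :
    rewardEps C Δt ε s ≤ reward C Δt s := by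
  have hmol0 : (0:ℝ) ≤ molPayoff C ε s.2 := le_max_right _ _
  have hmol1 : molPayoff C ε s.2 ≤ 1 := by
    apply max_le _ zero_le_one
    have : (0:ℝ) ≤ infDist s.2 (shrunkSet C ε) / ε := div_nonneg infDist_nonneg hε.le
    linarith
  unfold rewardEps reward
  split_ifs with h1 h2 h3 <;> simp_all <;> tauto

lemma traj_succ_eq (C : Set 𝒳) (Δt τ : ℝ) (x : ℕ → 𝒳) (k : ℕ)
    (hnab : ¬ IsAbsorbing C (augTraj C Δt τ x k))
    (heq : augTraj C Δt τ x k = (τ - k * Δt, x k)) :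
    augTraj C Δt τ x (k+1) = (τ - (k+1 : ℕ) * Δt, x (k+1)) := by
  have h1 : augTraj C Δt τ x (k+1) = ((augTraj C Δt τ x k).1 - Δt, x (k+1)) := by
    simp only [augTraj, if_neg hnab]
  rw [h1, heq]
  simp only [Prod.mk.injEq]
  exact ⟨by push_cast; ring, trivial⟩

lemma traj_spec (C : Set 𝒳) (Δt τ : ℝ) (x : ℕ → 𝒳) (k : ℕ) :
    IsAbsorbing C (augTraj C Δt τ x k) ∨
      (augTraj C Δt τ x k = (τ - k * Δt, x k) ∧ ∀ j ≤ k, x j ∈ C) := by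
  induction k with
  | zero =>
    by_cases h : IsAbsorbing C (augTraj C Δt τ x 0)
    · exact Or.inl h
    · refine Or.inr ⟨by simp [augTraj], ?_⟩
      intro j hj
      interval_cases j
      rcases not_or.1 h with ⟨-, h2⟩
      simpa [augTraj] using not_not.1 h2
  | succ k ih =>
    by_cases h : IsAbsorbing C (augTraj C Δt τ x (k+1))
    · exact Or.inl h
    · right
      rcases ih with hab | ⟨heq, hmem⟩
      · exfalso; apply h; simp [augTraj, hab]
      · have hnab : ¬ IsAbsorbing C (augTraj C Δt τ x k) := by
          intro hab
          apply h; simp [augTraj, hab]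
        have heq' := traj_succ_eq C Δt τ x k hnab heq
        refine ⟨heq', ?_⟩
        intro j hj
        rcases hj.lt_or_eq with h' | h'
        · exact hmem j (Nat.lt_succ_iff.1 h')
        · subst h'
          rcases not_or.1 h with ⟨-, h2⟩
          rw [heq'] at h2
          simpa using not_not.1 h2

lemma reward_traj_eq_zero (C : Set 𝒳) (Δt τ : ℝ) (x : ℕ → 𝒳)
    (hτ : 0 ≤ τ) (hΔt : 0 < Δt) (k : ℕ) (hk : k ≠ ⌊τ / Δt⌋₊) :
    reward C Δt (augTraj C Δt τ x k) = 0 := by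
  rcases traj_spec C Δt τ x k with hab | ⟨heq, -⟩
  · unfold reward; rw [if_neg]; tauto
  · unfold reward
    rw [if_neg]
    rintro ⟨h0, h1, -⟩
    rw [heq] at h0 h1
    simp only at h0 h1
    apply hk
    symm
    rw [Nat.floor_eq_iff (by positivity)]
    constructor
    · rw [le_div_iff₀ hΔt]; linarith
    · rw [div_lt_iff₀ hΔt]; push_cast; linarith

lemma traj_good (C : Set 𝒳) (Δt τ : ℝ) (x : ℕ → 𝒳)
    (hτ : 0 ≤ τ) (hΔt : 0 < Δt)
    (hall : ∀ j ≤ ⌊τ / Δt⌋₊, x j ∈ C) (k : ℕ) (hk : k ≤ ⌊τ / Δt⌋₊) :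
    augTraj C Δt τ x k = (τ - k * Δt, x k) ∧ ¬ IsAbsorbing C (augTraj C Δt τ x k) := by
  have hfloor : (⌊τ / Δt⌋₊ : ℝ) * Δt ≤ τ := by
    have h := Nat.floor_le (by positivity : (0:ℝ) ≤ τ / Δt)
    have h2 := mul_le_mul_of_nonneg_right h hΔt.le
    rwa [div_mul_cancel₀ _ (ne_of_gt hΔt)] at h2
  induction k with
  | zero =>
    have h0 : augTraj C Δt τ x 0 = (τ, x 0) := by simp [augTraj]
    refine ⟨by simpa using h0, ?_⟩
    rw [h0]
    rintro (h | h)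
    · exact absurd hτ (not_le.2 h)
    · exact h (hall 0 (Nat.zero_le _))
  | succ k ih =>
    have hk' : k ≤ ⌊τ / Δt⌋₊ := Nat.le_of_succ_le hk
    obtain ⟨heq, hnab⟩ := ih hk'
    have heq' := traj_succ_eq C Δt τ x k hnab heq
    refine ⟨heq', ?_⟩
    rw [heq']
    have hle : ((k:ℝ)+1) * Δt ≤ τ := by
      have h1 : ((k:ℝ)+1) ≤ (⌊τ / Δt⌋₊ : ℝ) := by exact_mod_cast hk
      have := mul_le_mul_of_nonneg_right h1 hΔt.le
      linarith
    rintro (h | h)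
    · simp only at h; push_cast at h; linarith
    · exact h (hall (k+1) hk)

lemma reward_traj_at_N (C : Set 𝒳) (Δt τ : ℝ) (x : ℕ → 𝒳)
    (hτ : 0 ≤ τ) (hΔt : 0 < Δt) :
    reward C Δt (augTraj C Δt τ x ⌊τ / Δt⌋₊) =
      if ∀ j ≤ ⌊τ / Δt⌋₊, x j ∈ C then 1 else 0 := by
  set N := ⌊τ / Δt⌋₊ with hN
  by_cases hall : ∀ j ≤ N, x j ∈ C
  · rw [if_pos hall]
    obtain ⟨heq, hnab⟩ := traj_good C Δt τ x hτ hΔt hall N le_rfl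
    unfold reward
    rw [if_pos]
    refine ⟨?_, ?_, hnab⟩
    · rw [heq]
      simp only
      have h := Nat.floor_le (by positivity : (0:ℝ) ≤ τ / Δt)
      have h2 := mul_le_mul_of_nonneg_right h hΔt.le
      rw [div_mul_cancel₀ _ (ne_of_gt hΔt)] at h2
      rw [← hN] at h2
      linarith
    · rw [heq]
      simp only
      have h : τ / Δt < (N : ℝ) + 1 := Nat.lt_floor_add_one _
      rw [div_lt_iff₀ hΔt] at h
      linarith
  · rw [if_neg hall]
    rcases traj_spec C Δt τ x N with hab | ⟨-, hmem⟩
    · unfold reward; rw [if_neg]; tauto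
    · exact absurd hmem hall

lemma reward_tsum (C : Set 𝒳) (Δt τ : ℝ) (x : ℕ → 𝒳)
    (hτ : 0 ≤ τ) (hΔt : 0 < Δt) :
    (∑' k : ℕ, reward C Δt (augTraj C Δt τ x k)) =
      if ∀ j ≤ ⌊τ / Δt⌋₊, x j ∈ C then 1 else 0 := by
  rw [tsum_eq_single ⌊τ / Δt⌋₊ (fun k hk => reward_traj_eq_zero C Δt τ x hτ hΔt k hk)]
  exact reward_traj_at_N C Δt τ x hτ hΔt

lemma reward_summable (C : Set 𝒳) (Δt τ : ℝ) (x : ℕ → 𝒳)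
    (hτ : 0 ≤ τ) (hΔt : 0 < Δt) :
    Summable (fun k : ℕ => reward C Δt (augTraj C Δt τ x k)) := by
  apply summable_of_ne_finset_zero (s := {⌊τ / Δt⌋₊})
  intro k hk
  exact reward_traj_eq_zero C Δt τ x hτ hΔt k (by simpa using hk)

end Aux

/-- conservativeness of the ε-mollified safety probability:
if `C_ε ≠ ∅` then pathwise the mollified return is bounded by the return, and
the mollified value is a lower bound for the safety probability. -/
theorem stmt_13 {Ω : Type*} [MeasurableSpace Ω] (P : Measure Ω) [IsProbabilityMeasure P]
    {𝒳 : Type*} [MetricSpace 𝒳] [MeasurableSpace 𝒳] [BorelSpace 𝒳]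
    (X : ℕ → Ω → 𝒳) (hX : ∀ k, Measurable (X k))
    (C : Set 𝒳) (hC : MeasurableSet C) (Δt τ ε : ℝ)
    (hΔt : 0 < Δt) (hτ : 0 ≤ τ) (hε : 0 < ε)
    (hne : (shrunkSet C ε).Nonempty) :
    (∀ ω : Ω, ∑' k : ℕ, rewardEps C Δt ε (augTraj C Δt τ (fun n => X n ω) k) ≤
        ∑' k : ℕ, reward C Δt (augTraj C Δt τ (fun n => X n ω) k)) ∧
    ∫ ω, (∑' k : ℕ, rewardEps C Δt ε (augTraj C Δt τ (fun n => X n ω) k)) ∂P ≤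
      (P {ω | ∀ k ≤ ⌊τ / Δt⌋₊, X k ω ∈ C}).toReal := by
  have part1 : ∀ ω : Ω, ∑' k : ℕ, rewardEps C Δt ε (augTraj C Δt τ (fun n => X n ω) k) ≤
      ∑' k : ℕ, reward C Δt (augTraj C Δt τ (fun n => X n ω) k) := by
    intro ω
    have hsum := reward_summable C Δt τ (fun n => X n ω) hτ hΔt
    have hle : ∀ k : ℕ, rewardEps C Δt ε (augTraj C Δt τ (fun n => X n ω) k) ≤
        reward C Δt (augTraj C Δt τ (fun n => X n ω) k) :=
      fun k => rewardEps_le_reward C Δt ε hε _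
    have hsumeps : Summable (fun k : ℕ =>
        rewardEps C Δt ε (augTraj C Δt τ (fun n => X n ω) k)) :=
      Summable.of_nonneg_of_le (fun k => rewardEps_nonneg C Δt ε _) hle hsum
    exact Summable.tsum_le_tsum hle hsumeps hsum
  refine ⟨part1, ?_⟩
  set S : Set Ω := {ω | ∀ k ≤ ⌊τ / Δt⌋₊, X k ω ∈ C} with hSdef
  have hS : MeasurableSet S := by
    have : S = ⋂ k : ℕ, ⋂ _ : k ≤ ⌊τ / Δt⌋₊, (X k) ⁻¹' C := by
      ext ω; simp [hSdef, Set.mem_iInter]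
    rw [this]
    exact MeasurableSet.iInter fun k => MeasurableSet.iInter fun _ => (hX k) hC
  have hgeq : ∀ ω : Ω, (∑' k : ℕ, reward C Δt (augTraj C Δt τ (fun n => X n ω) k)) =
      S.indicator (fun _ => (1:ℝ)) ω := by
    intro ω
    rw [reward_tsum C Δt τ (fun n => X n ω) hτ hΔt]
    by_cases h : ω ∈ S
    · rw [if_pos (by exact h), Set.indicator_of_mem h]
    · rw [if_neg (by exact h), Set.indicator_of_notMem h]
  have hInt : Integrable (S.indicator fun _ => (1:ℝ)) P :=
    (integrable_const (1:ℝ)).indicator hS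
  have step : ∫ ω, (∑' k : ℕ, rewardEps C Δt ε (augTraj C Δt τ (fun n => X n ω) k)) ∂P ≤
      ∫ ω, S.indicator (fun _ => (1:ℝ)) ω ∂P := by
    apply integral_mono_of_nonneg
    · exact Filter.Eventually.of_forall fun ω =>
        tsum_nonneg fun k => rewardEps_nonneg C Δt ε _
    · exact hInt
    · exact Filter.Eventually.of_forall fun ω => (hgeq ω ▸ part1 ω)
  calc _ ≤ ∫ ω, S.indicator (fun _ => (1:ℝ)) ω ∂P := step
    _ = (P S).toReal := by
        rw [integral_indicator_const (1:ℝ) hS, smul_eq_mul, mul_one, measureReal_def]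
    _ = (P {ω | ∀ k ≤ ⌊τ / Δt⌋₊, X k ω ∈ C}).toReal := rfl
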